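/- Let A ∈ ℝ^{n×n} be positive semidefinite, ρ ≥ 0, and let b̄, P̄, μ̄_b, μ̄_g ∈ ℝ^n and λ̄ ∈ ℝ satisfy b̄ ≥ 0, P̄ ≥ 0, μ̄_b ≥ 0, μ̄_g ≥ 0, b̄ᵀμ̄_b = 0, P̄ᵀμ̄_g = 0. Then for all ω ∈ ℝ^n, λ ∈ ℝ, u ∈ ℝ^{n−1}, and all b, P_g ∈ ℝ^n with b ≥ 0 and P_g ≥ 0, the following identity and inequality hold: uᵀD_tᵀω + ωᵀ(−D_t u − Aω + P_g − P̄) + (b − b̄)ᵀ(P_g − g(b) − P̄ + g(b̄) − μ̄_b) + (P_g − P̄)ᵀ(1(λ − λ̄) − (b − b̄) + ρ 1 1ᵀ(P̄ − P_g) − ω − μ̄_g) + (λ − λ̄) 1ᵀ(P̄ − P_g) = −ωᵀAω − (b − b̄)ᵀ(g(b) − g(b̄)) − ρ(1ᵀ(P̄ − P_g))² − (b − b̄)ᵀμ̄_b − (P_g − P̄)ᵀμ̄_g ≤ 0. -/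

import Mathlib

open Finset

noncomputable section

/-- Feasible production profiles for the dispatch problems:
power balance `1ᵀP = 1ᵀP_d` and componentwise nonnegativity. -/
def Feasible {n : ℕ} (Pd P : Fin n → ℝ) : Prop :=
  (∑ i, P i = ∑ i, Pd i) ∧ ∀ i, 0 ≤ P i

/-- `P` is an optimizer of the ISO problem for bids `b`:
it minimizes `bᵀP` over the feasible set. -/
def IsISOOpt {n : ℕ} (Pd b P : Fin n → ℝ) : Prop :=
  Feasible Pd P ∧ ∀ Q, Feasible Pd Q → ∑ i, b i * P i ≤ ∑ i, b i * Q i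

/-- `P` is a minimizer of the economic dispatch (ED) problem. -/
def IsEDOpt {n : ℕ} (C : Fin n → ℝ → ℝ) (Pd P : Fin n → ℝ) : Prop :=
  Feasible Pd P ∧ ∀ Q, Feasible Pd Q → ∑ i, C i (P i) ≤ ∑ i, C i (Q i)

/-- `(P, lam, mu)` is a KKT triple for the ED problem, with `C' i` the marginal
cost of generator `i`. -/
def IsKKT {n : ℕ} (C' : Fin n → ℝ → ℝ) (Pd P : Fin n → ℝ) (lam : ℝ)
    (mu : Fin n → ℝ) : Prop :=
  (∀ i, C' i (P i) = lam + mu i) ∧ (∑ i, P i = ∑ i, Pd i) ∧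
    (∀ i, 0 ≤ P i) ∧ (∀ i, 0 ≤ mu i) ∧ (∑ i, P i * mu i = 0)

/-- Payoff of a generator with cost `Ci` bidding `bi` and producing `Pi`. -/
def Payoff (Ci : ℝ → ℝ) (bi Pi : ℝ) : ℝ := Pi * bi - Ci Pi

/-- `bstar` is a Nash equilibrium of the inelastic electricity market game. -/
def IsNash {n : ℕ} (C : Fin n → ℝ → ℝ) (Pd bstar : Fin n → ℝ) : Prop :=
  (∀ i, 0 ≤ bstar i) ∧
  ∃ P0, IsISOOpt Pd bstar P0 ∧
    ∀ i (bi : ℝ), 0 ≤ bi → bi ≠ bstar i →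
      ∀ P, IsISOOpt Pd (Function.update bstar i bi) P →
        Payoff (C i) bi (P i) ≤ Payoff (C i) (bstar i) (P0 i)

/-- `bstar` is an efficient bid: the optimizer of the ED problem is also an
optimizer of the ISO problem for bids `bstar`, and each `Pstar i` maximizes
the profit `P ↦ P * bstar i - C i P` over `P ≥ 0`. -/
def IsEfficientBid {n : ℕ} (C : Fin n → ℝ → ℝ) (Pd bstar : Fin n → ℝ) : Prop :=
  (∀ i, 0 ≤ bstar i) ∧
  ∀ Pstar, IsEDOpt C Pd Pstar →
    IsISOOpt Pd bstar Pstar ∧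
      ∀ i, ∀ P, 0 ≤ P → Payoff (C i) (bstar i) P ≤ Payoff (C i) (bstar i) (Pstar i)

/-- Standing assumptions on a generator cost function: continuously
differentiable with derivative `Cf'`, strongly convex on `[0, ∞)`, and
nonnegative marginal cost at zero. -/
def CostAssumptions (Cf Cf' : ℝ → ℝ) : Prop :=
  (∀ x, HasDerivAt Cf (Cf' x) x) ∧ Continuous Cf' ∧
    (∃ m : ℝ, 0 < m ∧
      ∀ x y, 0 ≤ x → 0 ≤ y → (Cf' x - Cf' y) * (x - y) ≥ m * (x - y) ^ 2) ∧
    0 ≤ Cf' 0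

/-- `P` is the unique maximizer of the profit `Q ↦ β * Q - Cf Q` over `Q ≥ 0`. -/
def IsUniqueArgmaxProfit (Cf : ℝ → ℝ) (β P : ℝ) : Prop :=
  0 ≤ P ∧ (∀ Q, 0 ≤ Q → β * Q - Cf Q ≤ β * P - Cf P) ∧
    ∀ Q, 0 ≤ Q → (∀ R, 0 ≤ R → β * R - Cf R ≤ β * Q - Cf Q) → Q = P

open Matrix

/-- The Lyapunov-derivative identity and inequality
`⟨∇V(x), F(x)⟩ ≤ 0` along the closed-loop bidding/power-network dynamics
(with `σ = 1`), relative to an equilibrium with multipliers `μ̄_b, μ̄_g`. -/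
theorem lyapunov_derivative_nonpositive {n : ℕ}
    (C C' : Fin n → ℝ → ℝ) (hC : ∀ i, CostAssumptions (C i) (C' i))
    (g : Fin n → ℝ → ℝ) (hg : ∀ i β, IsUniqueArgmaxProfit (C i) β (g i β))
    (Dt : Matrix (Fin n) (Fin (n - 1)) ℝ)
    (A : Matrix (Fin n) (Fin n) ℝ) (hA : A.PosSemidef)
    (ρ : ℝ) (hρ : 0 ≤ ρ)
    (bbar Pbar μb μg : Fin n → ℝ) (lambar : ℝ)
    (hbbar : ∀ i, 0 ≤ bbar i) (hPbar : ∀ i, 0 ≤ Pbar i)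
    (hμb : ∀ i, 0 ≤ μb i) (hμg : ∀ i, 0 ≤ μg i)
    (hcompb : ∑ i, bbar i * μb i = 0) (hcompg : ∑ i, Pbar i * μg i = 0)
    (ω : Fin n → ℝ) (lam : ℝ) (u : Fin (n - 1) → ℝ)
    (b Pg : Fin n → ℝ) (hb : ∀ i, 0 ≤ b i) (hPg : ∀ i, 0 ≤ Pg i) :
    ((∑ j, u j * Dtᵀ.mulVec ω j)
      + (∑ i, ω i * (-(Dt.mulVec u) i - A.mulVec ω i + Pg i - Pbar i))
      + (∑ i, (b i - bbar i) * (Pg i - g i (b i) - Pbar i + g i (bbar i) - μb i))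
      + (∑ i, (Pg i - Pbar i) *
          ((lam - lambar) - (b i - bbar i) + ρ * (∑ j, (Pbar j - Pg j))
            - ω i - μg i))
      + (lam - lambar) * (∑ i, (Pbar i - Pg i))
      = -(∑ i, ω i * A.mulVec ω i)
        - (∑ i, (b i - bbar i) * (g i (b i) - g i (bbar i)))
        - ρ * (∑ i, (Pbar i - Pg i)) ^ 2
        - (∑ i, (b i - bbar i) * μb i)
        - (∑ i, (Pg i - Pbar i) * μg i))
    ∧
    (-(∑ i, ω i * A.mulVec ω i)
        - (∑ i, (b i - bbar i) * (g i (b i) - g i (bbar i)))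
        - ρ * (∑ i, (Pbar i - Pg i)) ^ 2
        - (∑ i, (b i - bbar i) * μb i)
        - (∑ i, (Pg i - Pbar i) * μg i) ≤ 0) := by
  -- monotonicity of each g i
  have hgmono : ∀ i, 0 ≤ (b i - bbar i) * (g i (b i) - g i (bbar i)) := by
    intro i
    obtain ⟨h1nn, h1max, -⟩ := hg i (b i)
    obtain ⟨h2nn, h2max, -⟩ := hg i (bbar i)
    have e1 := h1max (g i (bbar i)) h2nn
    have e2 := h2max (g i (b i)) h1nn
    nlinarith
  have hswap : (∑ j, u j * Dtᵀ.mulVec ω j) = ∑ i, ω i * Dt.mulVec u i := by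
    simp only [Matrix.mulVec, dotProduct, Matrix.transpose_apply, Finset.mul_sum]
    rw [Finset.sum_comm]
    exact Finset.sum_congr rfl fun i _ => Finset.sum_congr rfl fun j _ => by ring
  have hsplit : (∑ i, (Pg i - Pbar i) *
          ((lam - lambar) - (b i - bbar i) + ρ * (∑ j, (Pbar j - Pg j))
            - ω i - μg i))
      = (lam - lambar) * (∑ i, (Pg i - Pbar i))
        + ρ * (∑ j, (Pbar j - Pg j)) * (∑ i, (Pg i - Pbar i))
        + ∑ i, (Pg i - Pbar i) * (-(b i - bbar i) - ω i - μg i) := by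
    have h1 : ∀ i, (Pg i - Pbar i) *
          ((lam - lambar) - (b i - bbar i) + ρ * (∑ j, (Pbar j - Pg j))
            - ω i - μg i)
        = (lam - lambar) * (Pg i - Pbar i)
          + ρ * (∑ j, (Pbar j - Pg j)) * (Pg i - Pbar i)
          + (Pg i - Pbar i) * (-(b i - bbar i) - ω i - μg i) := fun i => by ring
    simp only [h1]
    rw [Finset.sum_add_distrib, Finset.sum_add_distrib, ← Finset.mul_sum,
      ← Finset.mul_sum]
  have hneg : (∑ i, (Pg i - Pbar i)) = -(∑ i, (Pbar i - Pg i)) := by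
    rw [← Finset.sum_neg_distrib]
    exact Finset.sum_congr rfl fun i _ => by ring
  have hmain : (∑ i, ω i * Dt.mulVec u i)
      + (∑ i, ω i * (-(Dt.mulVec u) i - A.mulVec ω i + Pg i - Pbar i))
      + (∑ i, (b i - bbar i) * (Pg i - g i (b i) - Pbar i + g i (bbar i) - μb i))
      + (∑ i, (Pg i - Pbar i) * (-(b i - bbar i) - ω i - μg i))
      + (∑ i, ω i * A.mulVec ω i)
      + (∑ i, (b i - bbar i) * (g i (b i) - g i (bbar i)))
      + (∑ i, (b i - bbar i) * μb i)
      + (∑ i, (Pg i - Pbar i) * μg i) = 0 := by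
    simp only [← Finset.sum_add_distrib]
    exact Finset.sum_eq_zero fun i _ => by ring
  constructor
  · rw [hswap, hsplit]
    linear_combination hmain
      + (lam - lambar + ρ * (∑ j, (Pbar j - Pg j))) * hneg
  · have h1 : 0 ≤ ∑ i, ω i * A.mulVec ω i := by
      have := hA.dotProduct_mulVec_nonneg ω
      simpa [dotProduct] using this
    have h2 : 0 ≤ ∑ i, (b i - bbar i) * (g i (b i) - g i (bbar i)) :=
      Finset.sum_nonneg fun i _ => hgmono i
    have h3 : 0 ≤ ρ * (∑ i, (Pbar i - Pg i)) ^ 2 :=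
      mul_nonneg hρ (sq_nonneg _)
    have h4 : 0 ≤ ∑ i, (b i - bbar i) * μb i := by
      have : (∑ i, (b i - bbar i) * μb i) = ∑ i, b i * μb i - ∑ i, bbar i * μb i := by
        rw [← Finset.sum_sub_distrib]
        exact Finset.sum_congr rfl fun i _ => by ring
      rw [this, hcompb, sub_zero]
      exact Finset.sum_nonneg fun i _ => mul_nonneg (hb i) (hμb i)
    have h5 : 0 ≤ ∑ i, (Pg i - Pbar i) * μg i := by
      have : (∑ i, (Pg i - Pbar i) * μg i) = ∑ i, Pg i * μg i - ∑ i, Pbar i * μg i := by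
        rw [← Finset.sum_sub_distrib]
        exact Finset.sum_congr rfl fun i _ => by ring
      rw [this, hcompg, sub_zero]
      exact Finset.sum_nonneg fun i _ => mul_nonneg (hPg i) (hμg i)
    linarith
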